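/- Let v ∈ H¹(0,∞) and r as above. Then for every x > 0, |v(x)|² ≤ r(x)⁻² ( (8 r(0)⁻² θ̄² + 1) ‖v‖²_{L²} + 2 ‖∂ₓ(r²v)‖²_{L²} ). -/

import Mathlib

open MeasureTheory Set

set_option maxHeartbeats 1000000 in
/-- Pointwise control, second inequality of (2.2) in Lemma 2.1. -/
theorem pointwise_control_two
    (v v' r r' : ℝ → ℝ) (θ₁ θ₂ : ℝ)
    (hv : ∀ x ∈ Ici (0:ℝ), HasDerivAt v (v' x) x)
    (hr : ∀ x ∈ Ici (0:ℝ), HasDerivAt r (r' x) x)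
    (hr0 : 0 < r 0)
    (hθ₁ : 0 < θ₁)
    (hlb : ∀ x ∈ Ici (0:ℝ), θ₁ ≤ (r x)^2 * r' x)
    (hub : ∀ x ∈ Ici (0:ℝ), (r x)^2 * r' x ≤ θ₂)
    (hvL2 : MemLp v 2 (volume.restrict (Ioi 0)))
    (hvxL2 : MemLp (fun x => 2 * r x * r' x * v x + (r x)^2 * v' x) 2
      (volume.restrict (Ioi 0))) :
    ∀ x > (0:ℝ),
      (v x)^2 ≤ ((r x)^2)⁻¹ *
        ((8 * ((r 0)^2)⁻¹ * θ₂^2 + 1) * (∫ y in Ioi (0:ℝ), (v y)^2)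
          + 2 * ∫ y in Ioi (0:ℝ), (2 * r y * r' y * v y + (r y)^2 * v' y)^2) := by
  intro x hx
  set w' : ℝ → ℝ := fun y => 2 * r y * r' y * v y + (r y)^2 * v' y with hw'def
  have hgoal : (∫ y in Ioi (0:ℝ), (w' y)^2) =
      ∫ y in Ioi (0:ℝ), (2 * r y * r' y * v y + (r y)^2 * v' y)^2 := by
    simp only [hw'def]
  rw [← hgoal]
  set M : ℝ := ∫ y in Ioi (0:ℝ), (v y)^2 with hMdef
  set W : ℝ := ∫ y in Ioi (0:ℝ), (w' y)^2 with hWdef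
  have hθ₂ : 0 < θ₂ := lt_of_lt_of_le hθ₁ ((hlb 0 Set.self_mem_Ici).trans (hub 0 Set.self_mem_Ici))
  -- cube bounds
  have h3 : ∀ t ∈ Ici (0:ℝ), HasDerivAt (fun t => r t ^ 3) (3 * ((r t)^2 * r' t)) t := by
    intro t ht
    have := (hr t ht).fun_pow 3
    refine this.congr_deriv ?_; push_cast; ring
  have hcube_lb : ∀ a ∈ Ici (0:ℝ), ∀ b ∈ Ici (0:ℝ), a ≤ b →
      (3*θ₁) * (b - a) ≤ r b ^ 3 - r a ^ 3 := by
    apply Convex.mul_sub_le_image_sub_of_le_deriv (convex_Ici 0)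
    · intro t ht; exact (h3 t ht).continuousAt.continuousWithinAt
    · intro t ht; rw [interior_Ici] at ht
      exact (h3 t (Set.mem_Ici.mpr (Set.mem_Ioi.mp ht).le)).differentiableAt.differentiableWithinAt
    · intro t ht; rw [interior_Ici] at ht
      rw [(h3 t (Set.mem_Ici.mpr (Set.mem_Ioi.mp ht).le)).deriv]
      have := hlb t (Set.mem_Ici.mpr (Set.mem_Ioi.mp ht).le); nlinarith
  -- r is positive and monotone, r t ≥ r 0
  have hrcube : ∀ t ∈ Ici (0:ℝ), r 0 ^ 3 + 3*θ₁*t ≤ r t ^ 3 := by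
    intro t ht
    have := hcube_lb 0 Set.self_mem_Ici t ht (by exact ht)
    linarith
  have hrpos : ∀ t ∈ Ici (0:ℝ), 0 < r t := by
    intro t ht
    have h1 : 0 < r t ^ 3 := by
      have := hrcube t ht; have ht' : (0:ℝ) ≤ t := ht
      nlinarith [pow_pos hr0 3, mul_nonneg hθ₁.le ht']
    exact (Odd.pow_pos_iff (by decide)).mp h1
  have hr0le : ∀ t ∈ Ici (0:ℝ), r 0 ≤ r t := by
    intro t ht
    have h1 : r 0 ^ 3 ≤ r t ^ 3 := by
      have := hrcube t ht; have ht' : (0:ℝ) ≤ t := ht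
      nlinarith [pow_pos hr0 3, mul_nonneg hθ₁.le ht']
    exact (pow_le_pow_iff_left₀ hr0.le (hrpos t ht).le (by norm_num)).mp h1
  -- bounds on r' and r * r'
  have hr'pos : ∀ t ∈ Ici (0:ℝ), 0 < r' t := by
    intro t ht
    have h1 := hlb t ht
    have h2 : 0 < r t ^ 2 := pow_pos (hrpos t ht) 2
    nlinarith
  have hrr'ub : ∀ t ∈ Ici (0:ℝ), r t * r' t ≤ θ₂ / r 0 := by
    intro t ht
    have h1 := hub t ht
    have hrt := hrpos t ht
    have hle := hr0le t ht
    have h2 : 0 ≤ r t * r' t := le_of_lt (mul_pos hrt (hr'pos t ht))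
    rw [le_div_iff₀ hr0]
    nlinarith [mul_le_mul_of_nonneg_left hle h2]
  have hr'ub : ∀ t ∈ Ici (0:ℝ), r' t ≤ θ₂ / r 0 ^ 2 := by
    intro t ht
    have h1 := hub t ht
    have hle : r 0 ^ 2 ≤ r t ^ 2 := pow_le_pow_left₀ hr0.le (hr0le t ht) 2
    have h2 := (hr'pos t ht).le
    rw [le_div_iff₀ (pow_pos hr0 2)]
    nlinarith [mul_le_mul_of_nonneg_left hle h2]
  -- measurability of r' on subsets of Ioi 0
  have hr'meas : ∀ s : Set ℝ, MeasurableSet s → s ⊆ Ioi 0 →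
      AEStronglyMeasurable r' (volume.restrict s) := by
    intro s hs hsub
    refine (stronglyMeasurable_deriv r).aestronglyMeasurable.congr ?_
    rw [Filter.EventuallyEq, ae_restrict_iff' hs]
    exact ae_of_all _ fun t ht => ((hr t (Set.mem_Ici.mpr (Set.mem_Ioi.mp (hsub ht)).le)).deriv)
  -- continuity of v, r on Ici 0
  have hvc : ContinuousOn v (Ici 0) := fun t ht => ((hv t ht).continuousAt).continuousWithinAt
  have hrc : ContinuousOn r (Ici 0) := fun t ht => ((hr t ht).continuousAt).continuousWithinAt
  -- L² facts
  have hvsq : IntegrableOn (fun y => (v y)^2) (Ioi 0) := hvL2.integrable_sq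
  have hwsq : IntegrableOn (fun y => (w' y)^2) (Ioi 0) := hvxL2.integrable_sq
  have hM : 0 ≤ M := integral_nonneg fun y => sq_nonneg _
  have hW : 0 ≤ W := integral_nonneg fun y => sq_nonneg _
  clear_value w' M W
  -- Claim 1: for y ≥ x, g x ≤ g y + (2θ₂/r0) M + (M/2 + 2W)
  have claim1 : ∀ y, x ≤ y →
      r x ^ 2 * v x ^ 2 ≤ r y ^ 2 * v y ^ 2 + (2*θ₂/r 0) * M + (M/2 + 2*W) := by
    intro y hxy
    have hsub : Icc x y ⊆ Ioi 0 := fun t ht => lt_of_lt_of_le hx ht.1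
    have hsub' : Ioc x y ⊆ Ioi 0 := fun t ht => lt_trans hx ht.1
    have hsubIci : Icc x y ⊆ Ici 0 := fun t ht => (Set.mem_Ici.mpr (Set.mem_Ioi.mp (hsub ht)).le)
    haveI : IsFiniteMeasure (volume.restrict (Ioc x y)) :=
      ⟨by rw [Measure.restrict_apply_univ]; exact measure_Ioc_lt_top⟩
    -- w' is integrable on Ioc x y
    have hw'mem : MemLp w' 2 (volume.restrict (Ioc x y)) := by
      have h1 := hvxL2.restrict (Ioc x y)
      rwa [Measure.restrict_restrict measurableSet_Ioc,
        inter_eq_left.mpr hsub'] at h1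
    have hw'int : IntegrableOn w' (Ioc x y) := hw'mem.integrable one_le_two
    -- bound for v on Icc x y
    obtain ⟨C, hC⟩ := (isCompact_Icc (a := x) (b := y)).exists_bound_of_continuousOn
      (hvc.mono hsubIci)
    have hC0 : 0 ≤ C := le_trans (norm_nonneg _) (hC x ⟨le_refl x, hxy⟩)
    have hCv : ∀ t ∈ Ioc x y, ‖v t‖ ≤ C := fun t ht => hC t ⟨ht.1.le, ht.2⟩
    -- v * w' integrable on Ioc x y
    have hvmeas : AEStronglyMeasurable v (volume.restrict (Ioc x y)) :=
      ((hvc.mono (fun t ht => (Set.mem_Ici.mpr (Set.mem_Ioi.mp (hsub' ht)).le))).aestronglyMeasurable measurableSet_Ioc)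
    have hvw'int : IntegrableOn (fun t => v t * w' t) (Ioc x y) := by
      refine Integrable.mono' (hw'int.norm.const_mul C)
        (hvmeas.mul hw'mem.aestronglyMeasurable) ?_
      rw [ae_restrict_iff' measurableSet_Ioc]
      refine ae_of_all _ fun t ht => ?_
      rw [norm_mul]
      exact mul_le_mul_of_nonneg_right (hCv t ht) (norm_nonneg _)
    -- r r' v² integrable on Ioc x y
    have hv2meas : AEStronglyMeasurable (fun t => v t ^ 2) (volume.restrict (Ioc x y)) := by
      simpa [pow_two] using hvmeas.fun_mul hvmeas
    have hrr'meas : AEStronglyMeasurable (fun t => r t * r' t * v t ^ 2)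
        (volume.restrict (Ioc x y)) := by
      refine AEStronglyMeasurable.mul (AEStronglyMeasurable.mul ?_
        (hr'meas _ measurableSet_Ioc hsub')) hv2meas
      exact (hrc.mono (fun t ht => (Set.mem_Ici.mpr (Set.mem_Ioi.mp (hsub' ht)).le))).aestronglyMeasurable measurableSet_Ioc
    have hrr'int : IntegrableOn (fun t => r t * r' t * v t ^ 2) (Ioc x y) := by
      refine Integrable.mono' (integrable_const (θ₂ / r 0 * C^2)) hrr'meas ?_
      rw [ae_restrict_iff' measurableSet_Ioc]
      refine ae_of_all _ fun t ht => ?_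
      have htI : t ∈ Ici (0:ℝ) := (Set.mem_Ici.mpr (Set.mem_Ioi.mp (hsub' ht)).le)
      have h1 := hrr'ub t htI
      have h2 : 0 ≤ r t * r' t := le_of_lt (mul_pos (hrpos t htI) (hr'pos t htI))
      have h3' : v t ^ 2 ≤ C ^ 2 := by
        have h4' := hCv t ht
        rw [Real.norm_eq_abs] at h4'
        nlinarith [sq_abs (v t), abs_nonneg (v t)]
      rw [Real.norm_eq_abs, abs_of_nonneg (mul_nonneg h2 (sq_nonneg _))]
      nlinarith [mul_le_mul h1 h3' (sq_nonneg (v t)) (div_nonneg hθ₂.le hr0.le)]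
    -- derivative of g = r² v²
    have hgderiv : ∀ t ∈ uIcc x y, HasDerivAt (fun t => r t ^ 2 * v t ^ 2)
        (2 * (v t * w' t) - 2 * (r t * r' t * v t ^ 2)) t := by
      intro t ht
      rw [uIcc_of_le hxy] at ht
      have htI : t ∈ Ici (0:ℝ) := hsubIci ht
      have h1 := ((hr t htI).fun_pow 2).fun_mul ((hv t htI).fun_pow 2)
      refine h1.congr_deriv ?_
      simp only [hw'def]
      push_cast
      ring
    -- interval integrability of g'
    have hgint : IntervalIntegrable
        (fun t => 2 * (v t * w' t) - 2 * (r t * r' t * v t ^ 2)) volume x y := by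
      rw [intervalIntegrable_iff, uIoc_of_le hxy]
      exact ((hvw'int.const_mul 2).sub (hrr'int.const_mul 2))
    have hFTC := intervalIntegral.integral_eq_sub_of_hasDerivAt hgderiv hgint
    rw [intervalIntegral.integral_of_le hxy] at hFTC
    beta_reduce at hFTC
    -- split the integral
    have hsplit : ∫ t in Ioc x y, (2 * (v t * w' t) - 2 * (r t * r' t * v t ^ 2)) =
        (∫ t in Ioc x y, 2 * (v t * w' t)) - ∫ t in Ioc x y, 2 * (r t * r' t * v t ^ 2) :=
      integral_sub (hvw'int.const_mul 2) (hrr'int.const_mul 2)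
    -- bound A : ∫ 2 r r' v² ≤ (2θ₂/r0) M
    have boundA : ∫ t in Ioc x y, 2 * (r t * r' t * v t ^ 2) ≤ (2*θ₂/r 0) * M := by
      have step1 : ∫ t in Ioc x y, 2 * (r t * r' t * v t ^ 2) ≤
          ∫ t in Ioc x y, (2*θ₂/r 0) * v t ^ 2 := by
        refine setIntegral_mono_on (hrr'int.const_mul 2)
          ((hvsq.mono_set hsub').const_mul _) measurableSet_Ioc fun t ht => ?_
        have htI : t ∈ Ici (0:ℝ) := (Set.mem_Ici.mpr (Set.mem_Ioi.mp (hsub' ht)).le)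
        have h1 := hrr'ub t htI
        have h2 := sq_nonneg (v t)
        have h9 : 2*θ₂/r 0 * v t ^ 2 = 2*((θ₂/r 0) * v t ^ 2) := by ring
        rw [h9]
        linarith [mul_le_mul_of_nonneg_right h1 h2]
      have step2 : ∫ t in Ioc x y, v t ^ 2 ≤ M := by
        rw [hMdef]
        exact setIntegral_mono_set hvsq (ae_of_all _ fun t => sq_nonneg _)
          (HasSubset.Subset.eventuallyLE hsub')
      have h0 : 0 ≤ 2*θ₂/r 0 := by positivity
      calc ∫ t in Ioc x y, 2 * (r t * r' t * v t ^ 2)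
          ≤ ∫ t in Ioc x y, (2*θ₂/r 0) * v t ^ 2 := step1
        _ = (2*θ₂/r 0) * ∫ t in Ioc x y, v t ^ 2 := integral_const_mul _ _
        _ ≤ (2*θ₂/r 0) * M := mul_le_mul_of_nonneg_left step2 h0
    -- bound B : |∫ 2 v w'| ≤ M/2 + 2W
    have boundB : |∫ t in Ioc x y, 2 * (v t * w' t)| ≤ M/2 + 2*W := by
      rw [← Real.norm_eq_abs]
      have h1 : ‖∫ t in Ioc x y, 2 * (v t * w' t)‖ ≤
          ∫ t in Ioc x y, ‖2 * (v t * w' t)‖ :=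
        norm_integral_le_integral_norm _
      have h2 : (∫ t in Ioc x y, ‖2 * (v t * w' t)‖) ≤
          ∫ t in Ioc x y, (v t ^ 2 / 2 + 2 * w' t ^ 2) := by
        refine setIntegral_mono_on ((hvw'int.const_mul 2).norm)
          (((hvsq.mono_set hsub').div_const 2).add ((hwsq.mono_set hsub').const_mul 2))
          measurableSet_Ioc fun t ht => ?_
        rw [Real.norm_eq_abs, abs_mul, abs_mul]
        have h8 : |(2:ℝ)| = 2 := by norm_num
        rw [h8]
        have h5' : 4*(|v t| * |w' t|) ≤ |v t|^2 + 4*|w' t|^2 := by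
          nlinarith [sq_nonneg (|v t| - 2 * |w' t|)]
        have e1 : |v t|^2 = v t ^ 2 := sq_abs _
        have e2 : |w' t|^2 = w' t ^ 2 := sq_abs _
        linarith [h5', e1, e2]
      have h3' : ∫ t in Ioc x y, (v t ^ 2 / 2 + 2 * w' t ^ 2) ≤
          ∫ t in Ioi (0:ℝ), (v t ^ 2 / 2 + 2 * w' t ^ 2) :=
        setIntegral_mono_set ((hvsq.div_const 2).add (hwsq.const_mul 2))
          (ae_of_all _ fun t => by positivity)
          (HasSubset.Subset.eventuallyLE hsub')
      have h4 : ∫ t in Ioi (0:ℝ), (v t ^ 2 / 2 + 2 * w' t ^ 2) = M/2 + 2*W := by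
        rw [integral_add (hvsq.div_const 2) (hwsq.const_mul 2),
          integral_div, integral_const_mul, hMdef, hWdef]
      linarith
    -- combine
    have habs := abs_le.mp boundB
    linarith [hFTC, hsplit, boundA, habs.1]
  -- Claim 2: for every ε > 0 there is y ≥ x with r y² v y² ≤ ε
  have claim2 : ∀ ε > (0:ℝ), ∃ y, x ≤ y ∧ r y ^ 2 * v y ^ 2 ≤ ε := by
    intro ε hε
    by_contra hcon
    push_neg at hcon
    -- choose N with r N large
    set K : ℝ := r x + θ₂ * M / ε + 1 with hKdef
    have hrx : 0 < r x := hrpos x hx.le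
    have hK : 0 < K := by
      have h := div_nonneg (mul_nonneg hθ₂.le hM) hε.le
      rw [hKdef]; linarith
    set N : ℝ := max x (K^3 / (3*θ₁)) with hNdef
    have hxN : x ≤ N := le_max_left _ _
    have hN0 : (0:ℝ) ≤ N := le_trans hx.le hxN
    have hrN : K ≤ r N := by
      have h1 : K ^ 3 ≤ r N ^ 3 := by
        have h2 := hrcube N hN0
        have h3' : K^3 / (3*θ₁) ≤ N := le_max_right _ _
        rw [div_le_iff₀ (by linarith : (0:ℝ) < 3*θ₁)] at h3'
        nlinarith [pow_pos hr0 3]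
      exact (pow_le_pow_iff_left₀ hK.le (hrpos N hN0).le (by norm_num)).mp h1
    -- FTC for r on [x, N]
    have hsub' : Ioc x N ⊆ Ioi 0 := fun t ht => lt_trans hx ht.1
    have hr'int : IntegrableOn r' (Ioc x N) := by
      refine Integrable.mono' (integrable_const (θ₂ / r 0 ^ 2))
        (hr'meas _ measurableSet_Ioc hsub') ?_
      rw [ae_restrict_iff' measurableSet_Ioc]
      refine ae_of_all _ fun t ht => ?_
      rw [Real.norm_eq_abs, abs_of_pos (hr'pos t (Set.mem_Ici.mpr (Set.mem_Ioi.mp (hsub' ht)).le))]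
      exact hr'ub t (Set.mem_Ici.mpr (Set.mem_Ioi.mp (hsub' ht)).le)
    have hrFTC : ∫ t in Ioc x N, r' t = r N - r x := by
      have h1 := intervalIntegral.integral_eq_sub_of_hasDerivAt
        (f := r) (f' := r') (a := x) (b := N)
        (fun t ht => hr t (by rw [uIcc_of_le hxN] at ht; exact le_trans hx.le ht.1))
        (by rw [intervalIntegrable_iff, uIoc_of_le hxN]; exact hr'int)
      rwa [intervalIntegral.integral_of_le hxN] at h1
    -- lower bound for ∫ v² on Ioc x N
    have hlow : ∫ t in Ioc x N, (ε/θ₂) * r' t ≤ ∫ t in Ioc x N, v t ^ 2 := by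
      refine setIntegral_mono_on (hr'int.const_mul _) (hvsq.mono_set hsub')
        measurableSet_Ioc fun t ht => ?_
      have htI : t ∈ Ici (0:ℝ) := (Set.mem_Ici.mpr (Set.mem_Ioi.mp (hsub' ht)).le)
      have h1 : ε < r t ^ 2 * v t ^ 2 := hcon t ht.1.le
      have h2 := hub t htI
      have hrt2 : 0 < r t ^ 2 := pow_pos (hrpos t htI) 2
      rw [div_mul_eq_mul_div, div_le_iff₀ hθ₂]
      nlinarith [mul_le_mul_of_nonneg_left h2 hε.le,
        mul_lt_mul_of_pos_right h1 hθ₂]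
    have hup : ∫ t in Ioc x N, v t ^ 2 ≤ M := by
      rw [hMdef]
      exact setIntegral_mono_set hvsq (ae_of_all _ fun t => sq_nonneg _)
        (HasSubset.Subset.eventuallyLE hsub')
    rw [integral_const_mul, hrFTC] at hlow
    -- contradiction
    have hKK : θ₂ * M / ε + 1 ≤ r N - r x := by
      rw [hKdef] at hrN; linarith
    have heq : (ε/θ₂) * (θ₂ * M / ε + 1) = M + ε/θ₂ := by
      field_simp
    have h6 := mul_le_mul_of_nonneg_left hKK (div_nonneg hε.le hθ₂.le)
    have h7 : 0 < ε/θ₂ := div_pos hε hθ₂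
    rw [heq] at h6
    linarith
  -- combine the two claims
  have key : r x ^ 2 * v x ^ 2 ≤ (8 * ((r 0)^2)⁻¹ * θ₂^2 + 1) * M + 2 * W := by
    have hcoef : (2*θ₂/r 0) * M ≤ 8 * ((r 0)^2)⁻¹ * θ₂^2 * M + M/2 := by
      have htineq : 2*(θ₂/r 0) ≤ 8*(θ₂/r 0)^2 + 1/2 := by
        nlinarith [sq_nonneg (4*(θ₂/r 0) - 1)]
      have h9 := mul_le_mul_of_nonneg_right htineq hM
      have e1 : 2*θ₂/r 0 * M = 2*(θ₂/r 0) * M := by ring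
      have e2 : (8*(θ₂/r 0)^2 + 1/2) * M = 8 * ((r 0)^2)⁻¹ * θ₂^2 * M + M/2 := by
        ring
      linarith [e1, e2, h9]
    by_contra hcontra
    push_neg at hcontra
    obtain ⟨y, hxy, hy⟩ := claim2
      ((r x ^ 2 * v x ^ 2 - ((8 * ((r 0)^2)⁻¹ * θ₂^2 + 1) * M + 2 * W))/2) (by linarith)
    have h1 := claim1 y hxy
    linarith [hcoef, h1, hy]
  -- conclude
  have hrx2 : 0 < r x ^ 2 := pow_pos (hrpos x hx.le) 2
  calc (v x)^2 = ((r x)^2)⁻¹ * (r x ^ 2 * v x ^ 2) := by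
        rw [← mul_assoc, inv_mul_cancel₀ hrx2.ne', one_mul]
    _ ≤ ((r x)^2)⁻¹ * ((8 * ((r 0)^2)⁻¹ * θ₂^2 + 1) * M + 2 * W) :=
        mul_le_mul_of_nonneg_left key (inv_nonneg.mpr hrx2.le)
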